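/- Let X = {i,j,k,l} be a four-element set and δ a dissimilarity map on X. The pair (i,j) minimizes the neighbor-joining Q-criterion Q_δ among all pairs if and only if δ(i,j) + δ(k,l) ≤ min(δ(i,k) + δ(j,l), δ(i,l) + δ(j,k)). -/

import Mathlib

open Finset

/-- The neighbor-joining Q-criterion. -/
noncomputable def njQ {X : Type*} [Fintype X] [DecidableEq X]
    (δ : X → X → ℝ) (i j : X) : ℝ :=
  δ i j - (1 / ((Fintype.card X : ℝ) - 2)) *
    ((∑ k ∈ Finset.univ.erase i, δ i k) + (∑ k ∈ Finset.univ.erase j, δ j k))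

lemma njQ_four {X : Type*} [Fintype X] [DecidableEq X]
    (w x y z : X) (hwx : w ≠ x) (hwy : w ≠ y) (hwz : w ≠ z)
    (hxy : x ≠ y) (hxz : x ≠ z) (hyz : y ≠ z)
    (hcover : ({w, x, y, z} : Finset X) = Finset.univ)
    (δ : X → X → ℝ) :
    njQ δ w x = δ w x - (1/2) * ((δ w x + δ w y + δ w z) + (δ x w + δ x y + δ x z)) := by
  have hcard : Fintype.card X = 4 := by
    rw [← Finset.card_univ, ← hcover]
    rw [Finset.card_insert_of_notMem (by simp [hwx, hwy, hwz]),
      Finset.card_insert_of_notMem (by simp [hxy, hxz]),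
      Finset.card_insert_of_notMem (by simp [hyz]), Finset.card_singleton]
  have h1 : Finset.univ.erase w = ({x, y, z} : Finset X) := by
    rw [← hcover]
    ext t
    simp only [Finset.mem_erase, Finset.mem_insert, Finset.mem_singleton]
    constructor
    · rintro ⟨ht, h⟩; tauto
    · rintro (rfl | rfl | rfl) <;> simp [hwx.symm, hwy.symm, hwz.symm]
  have h2 : Finset.univ.erase x = ({w, y, z} : Finset X) := by
    rw [← hcover]
    ext t
    simp only [Finset.mem_erase, Finset.mem_insert, Finset.mem_singleton]
    constructor
    · rintro ⟨ht, h⟩; tauto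
    · rintro (rfl | rfl | rfl) <;> simp [hwx, hxy.symm, hxz.symm]
  rw [njQ, h1, h2, hcard]
  rw [Finset.sum_insert (by simp [hxy, hxz]), Finset.sum_insert (by simp [hyz]),
    Finset.sum_singleton, Finset.sum_insert (by simp [hwy, hwz]),
    Finset.sum_insert (by simp [hyz]), Finset.sum_singleton]
  norm_num
  ring

set_option maxHeartbeats 2000000 in
/-- on a four-element set `X = {i,j,k,l}`, the pair `(i,j)` minimizes the
Q-criterion iff `δ(i,j)+δ(k,l) ≤ min(δ(i,k)+δ(j,l), δ(i,l)+δ(j,k))`. -/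
theorem statement_1 {X : Type*} [Fintype X] [DecidableEq X]
    (i j k l : X)
    (hij : i ≠ j) (hik : i ≠ k) (hil : i ≠ l)
    (hjk : j ≠ k) (hjl : j ≠ l) (hkl : k ≠ l)
    (hcover : ({i, j, k, l} : Finset X) = Finset.univ)
    (δ : X → X → ℝ)
    (hsym : ∀ x y, δ x y = δ y x) (hdiag : ∀ x, δ x x = 0) :
    (∀ p q : X, p ≠ q → njQ δ i j ≤ njQ δ p q) ↔
      δ i j + δ k l ≤ min (δ i k + δ j l) (δ i l + δ j k) := by
  have cov : ∀ a b c d : X, ({a, b, c, d} : Finset X) = {i, j, k, l} →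
      ({a, b, c, d} : Finset X) = Finset.univ := fun a b c d h => h.trans hcover
  have cov1 : ({i, k, j, l} : Finset X) = Finset.univ := by
    apply cov; ext t; simp; tauto
  have cov2 : ({i, l, j, k} : Finset X) = Finset.univ := by
    apply cov; ext t; simp; tauto
  have cov3 : ({j, k, i, l} : Finset X) = Finset.univ := by
    apply cov; ext t; simp; tauto
  have cov4 : ({j, l, i, k} : Finset X) = Finset.univ := by
    apply cov; ext t; simp; tauto
  have cov5 : ({k, l, i, j} : Finset X) = Finset.univ := by
    apply cov; ext t; simp; tauto
  have Qsymm : ∀ p q : X, njQ δ q p = njQ δ p q := by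
    intro p q; rw [njQ, njQ, hsym q p, add_comm]
  have Qij := njQ_four i j k l hij hik hil hjk hjl hkl hcover δ
  have Qik := njQ_four i k j l hik hij hil hjk.symm hkl hjl cov1 δ
  have Qil := njQ_four i l j k hil hij hik hjl.symm hkl.symm hjk cov2 δ
  have Qjk := njQ_four j k i l hjk hij.symm hjl hik.symm hkl hil cov3 δ
  have Qjl := njQ_four j l i k hjl hij.symm hjk hil.symm hkl.symm hik cov4 δ
  have Qkl := njQ_four k l i j hkl hik.symm hjk.symm hil.symm hjl.symm hij cov5 δ
  simp only [hsym j i, hsym k i, hsym l i, hsym k j, hsym l j, hsym l k]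
    at Qij Qik Qil Qjk Qjl Qkl
  have Qji : njQ δ j i = _ := (Qsymm i j).trans Qij
  have Qki : njQ δ k i = _ := (Qsymm i k).trans Qik
  have Qli : njQ δ l i = _ := (Qsymm i l).trans Qil
  have Qkj : njQ δ k j = _ := (Qsymm j k).trans Qjk
  have Qlj : njQ δ l j = _ := (Qsymm j l).trans Qjl
  have Qlk : njQ δ l k = _ := (Qsymm k l).trans Qkl
  rw [le_min_iff]
  constructor
  · intro h
    have h1 := h i k hik
    have h2 := h i l hil
    rw [Qij, Qik] at h1
    rw [Qij, Qil] at h2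
    constructor <;> linarith
  · rintro ⟨h1, h2⟩ p q hpq
    have hp : p = i ∨ p = j ∨ p = k ∨ p = l := by
      have := Finset.mem_univ p; rw [← hcover] at this; simpa using this
    have hq : q = i ∨ q = j ∨ q = k ∨ q = l := by
      have := Finset.mem_univ q; rw [← hcover] at this; simpa using this
    rcases hp with rfl | rfl | rfl | rfl <;> rcases hq with rfl | rfl | rfl | rfl <;>
      first
        | exact absurd rfl hpq
        | (simp only [Qij, Qik, Qil, Qjk, Qjl, Qkl, Qji, Qki, Qli, Qkj, Qlj, Qlk]; linarith)
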